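/- arXiv:1702.05306 — 5 statements merged into one kernel-verified Lean document; each statement's English description precedes it below -/
import Mathlib

section
/- Let p, q be coprime positive integers with 1 ≤ q ≤ p/2, and let q' be an integer with 1 ≤ q' ≤ p/2 and q·q' ≡ ±1 (mod p). Then p ≡ ±1 (mod q) if and only if p ≡ ±1 (mod q'). -/
private lemma uniq_aux (p b c : ℕ) (hb1 : 1 ≤ b) (hb : 2 * b ≤ p)
    (hc1 : 1 ≤ c) (hc : 2 * c ≤ p)
    (h : (b : ZMod p) = (c : ZMod p) ∨ (b : ZMod p) = -(c : ZMod p)) : b = c := by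
  rcases h with h | h
  · rw [ZMod.natCast_eq_natCast_iff] at h
    have hb' : b % p = b := Nat.mod_eq_of_lt (by omega)
    have hc' : c % p = c := Nat.mod_eq_of_lt (by omega)
    unfold Nat.ModEq at h
    omega
  · have : ((b + c : ℕ) : ZMod p) = 0 := by push_cast; rw [h]; ring
    rw [ZMod.natCast_eq_zero_iff] at this
    have := Nat.le_of_dvd (by omega) this
    omega

private lemma uniq2 (p q b c : ℕ) (hp : 2 ≤ p) (hcop : Nat.Coprime p q)
    (hb1 : 1 ≤ b) (hb : 2 * b ≤ p) (hc1 : 1 ≤ c) (hc : 2 * c ≤ p)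
    (hqb : (q * b : ZMod p) = 1 ∨ (q * b : ZMod p) = -1)
    (hqc : (q * c : ZMod p) = 1 ∨ (q * c : ZMod p) = -1) : b = c := by
  haveI : NeZero p := ⟨by omega⟩
  have hu : IsUnit (q : ZMod p) := (ZMod.isUnit_iff_coprime q p).mpr hcop.symm
  apply uniq_aux p b c hb1 hb hc1 hc
  push_cast at hqb hqc
  rcases hqb with h1 | h1 <;> rcases hqc with h2 | h2
  · left; exact hu.mul_left_cancel (by linear_combination h1 - h2)
  · right; exact hu.mul_left_cancel (by linear_combination h1 + h2)
  · right; exact hu.mul_left_cancel (by linear_combination h1 + h2)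
  · left; exact hu.mul_left_cancel (by linear_combination h1 - h2)

private lemma aux_dir (p q q' : ℕ) (hq : 1 ≤ q) (hcop : Nat.Coprime p q)
    (hrange : 2 * q ≤ p) (hq' : 1 ≤ q') (hrange' : 2 * q' ≤ p)
    (hdual : (q * q' : ZMod p) = 1 ∨ (q * q' : ZMod p) = -1)
    (h : (p : ZMod q) = 1 ∨ (p : ZMod q) = -1) :
    (p : ZMod q') = 1 ∨ (p : ZMod q') = -1 := by
  have hp : 2 ≤ p := by omega
  by_cases hq1 : q = 1
  · subst hq1
    have hq'1 : q' = 1 := by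
      apply uniq_aux p q' 1 hq' hrange' le_rfl (by omega)
      push_cast at hdual ⊢
      rcases hdual with h' | h'
      · left; rw [← h']; ring
      · right; rw [← h']; ring
    subst hq'1
    left; exact Subsingleton.elim _ _
  · have hq2 : 2 ≤ q := by omega
    have hdv : q ∣ p - 1 ∨ q ∣ p + 1 := by
      rcases h with h | h
      · left
        have : ((p - 1 : ℕ) : ZMod q) = 0 := by
          rw [Nat.cast_sub (by omega), h, Nat.cast_one, sub_self]
        rwa [ZMod.natCast_eq_zero_iff] at this
      · right
        have : ((p + 1 : ℕ) : ZMod q) = 0 := by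
          push_cast; rw [h]; ring
        rwa [ZMod.natCast_eq_zero_iff] at this
    have key : q ∣ p - 1 ∨ (q ∣ p + 1 ∧ 3 ≤ q) := by
      rcases hdv with h' | h'
      · left; exact h'
      · rcases Nat.lt_or_ge q 3 with h3 | h3
        · left
          have : q = 2 := by omega
          subst this; omega
        · right; exact ⟨h', h3⟩
    rcases key with h' | ⟨h', hq3⟩
    · obtain ⟨a, ha⟩ := h'
      have hpa : p = q * a + 1 := by omega
      have ha1 : 1 ≤ a := by
        rcases Nat.eq_zero_or_pos a with h0 | h0
        · subst h0; simp at hpa; omega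
        · exact h0
      have ha2 : 2 * a ≤ p := by
        have hle : 2 * a ≤ q * a := Nat.mul_le_mul_right a hq2
        omega
      have hqa : ((q : ZMod p) * a) = -1 := by
        have hna : q * a = p - 1 := by omega
        have : ((q * a : ℕ) : ZMod p) = ((p - 1 : ℕ) : ZMod p) := by rw [hna]
        rw [Nat.cast_sub (by omega), ZMod.natCast_self, Nat.cast_one, zero_sub,
          Nat.cast_mul] at this
        exact this
      have heq : q' = a := by
        apply uniq2 p q q' a hp hcop hq' hrange' ha1 ha2 hdual
        right; push_cast; exact hqa
      subst heq
      left
      rw [hpa, Nat.cast_add, Nat.cast_mul, ZMod.natCast_self, mul_zero, zero_add, Nat.cast_one]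
    · obtain ⟨a, ha⟩ := h'
      have ha1 : 1 ≤ a := by
        rcases Nat.eq_zero_or_pos a with h0 | h0
        · subst h0; simp at ha
        · exact h0
      have ha2 : 2 * a ≤ p := by
        have hle : 3 * a ≤ q * a := Nat.mul_le_mul_right a hq3
        omega
      have hqa : ((q : ZMod p) * a) = 1 := by
        have hna : q * a = p + 1 := by omega
        have : ((q * a : ℕ) : ZMod p) = ((p + 1 : ℕ) : ZMod p) := by rw [hna]
        rw [Nat.cast_add, ZMod.natCast_self, Nat.cast_one, zero_add, Nat.cast_mul] at this
        exact this
      have heq : q' = a := by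
        apply uniq2 p q q' a hp hcop hq' hrange' ha1 ha2 hdual
        left; push_cast; exact hqa
      subst heq
      right
      have h0 : ((p + 1 : ℕ) : ZMod q') = 0 := by
        rw [ha, Nat.cast_mul, ZMod.natCast_self, mul_zero]
      push_cast at h0
      exact eq_neg_of_add_eq_zero_left h0

/-- Let `p, q` be coprime positive integers with `1 ≤ q ≤ p/2` and let `q'` satisfy
`1 ≤ q' ≤ p/2` and `q·q' ≡ ±1 (mod p)`.  Then `p ≡ ±1 (mod q)` iff `p ≡ ±1 (mod q')`. -/
theorem cong_pm_one_iff_dual (p q q' : ℕ) (hq : 1 ≤ q) (hcop : Nat.Coprime p q)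
    (hrange : 2 * q ≤ p) (hq' : 1 ≤ q') (hrange' : 2 * q' ≤ p)
    (hdual : (q * q' : ZMod p) = 1 ∨ (q * q' : ZMod p) = -1) :
    ((p : ZMod q) = 1 ∨ (p : ZMod q) = -1) ↔
      ((p : ZMod q') = 1 ∨ (p : ZMod q') = -1) := by
  have hp : 2 ≤ p := by omega
  haveI : NeZero p := ⟨by omega⟩
  have hcop' : Nat.Coprime p q' := by
    have hu : IsUnit (q' : ZMod p) := by
      rcases hdual with h | h <;> push_cast at h
      · exact IsUnit.of_mul_eq_one (q : ZMod p) (by rw [mul_comm]; exact h)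
      · exact IsUnit.of_mul_eq_one (-(q : ZMod p)) (by linear_combination -h)
    exact ((ZMod.isUnit_iff_coprime q' p).mp hu).symm
  have hdual' : (q' * q : ZMod p) = 1 ∨ (q' * q : ZMod p) = -1 := by
    rw [mul_comm]; exact hdual
  constructor
  · exact aux_dir p q q' hq hcop hrange hq' hrange' hdual
  · exact aux_dir p q' q hq' hcop' hrange' hq hrange hdual'
end

section
/- Suppose a group G acts on a (simplicial) tree T without inversion of edges, the action is transitive on vertices and transitive on (geometric) edges, and some element of G swaps the two endpoints of some edge e. Let e' be a half-edge of the barycentric subdivision of T (an edge from a vertex v to the barycenter of e). Then G is isomorphic to the amalgamated free product G_v *_{G_{e,oriented}} G_{e}, where G_v is the stabilizer of the vertex v, G_{e,oriented} is the stabilizer of the ordered edge e, and G_e is the setwise stabilizer of e. -/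
open Pointwise

private lemma tree_dist_aux {V : Type} {T : SimpleGraph V} (hT : T.IsTree)
    {x u v w : V} (huv : T.Adj u v) (huw : T.Adj u w) (hvw : v ≠ w)
    (hv : T.dist x v + 1 = T.dist x u) : T.dist x w = T.dist x u + 1 := by
  classical
  have hconn := hT.isConnected
  have hle : T.dist x w ≤ T.dist x u + 1 := by
    have h1 := hconn.dist_triangle (u := x) (v := u) (w := w)
    rwa [SimpleGraph.dist_eq_one_iff_adj.2 huw] at h1
  rcases Nat.lt_or_ge (T.dist x w) (T.dist x u + 1) with hlt | hge
  · exfalso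
    have hwle : T.dist x w ≤ T.dist x u := by omega
    obtain ⟨p, hp, hpl⟩ := hconn.exists_path_of_dist x v
    obtain ⟨q, hq, hql⟩ := hconn.exists_path_of_dist x w
    have hup : u ∉ p.support := by
      intro hmem
      have h1 : T.dist x u ≤ (p.takeUntil u hmem).length := T.dist_le _
      have h2 := p.length_takeUntil_le hmem
      omega
    have huq : u ∉ q.support := by
      intro hmem
      have h1 : T.dist x u ≤ (q.takeUntil u hmem).length := T.dist_le _
      have h2 := q.length_takeUntil_le hmem
      have h4 := congrArg SimpleGraph.Walk.length (q.take_spec hmem)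
      rw [SimpleGraph.Walk.length_append] at h4
      have h5 : (q.dropUntil u hmem).length = 0 := by omega
      exact huw.ne (SimpleGraph.Walk.eq_of_length_eq_zero h5)
    have hP1 : (SimpleGraph.Walk.cons huv p.reverse).IsPath :=
      hp.reverse.cons (by simpa [SimpleGraph.Walk.support_reverse] using hup)
    have hP2 : (SimpleGraph.Walk.cons huw q.reverse).IsPath :=
      hq.reverse.cons (by simpa [SimpleGraph.Walk.support_reverse] using huq)
    have hpq := (hT.existsUnique_path u x).unique hP1 hP2
    have hsupp := congrArg SimpleGraph.Walk.support hpq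
    rw [SimpleGraph.Walk.support_cons, SimpleGraph.Walk.support_cons] at hsupp
    have h6 : p.reverse.support = q.reverse.support := by simpa using hsupp
    rw [SimpleGraph.Walk.support_eq_cons p.reverse,
      SimpleGraph.Walk.support_eq_cons q.reverse] at h6
    simp only [List.cons.injEq] at h6
    exact hvw h6.1
  · omega

private lemma word_invariant {V Γ : Type} [Group Γ] [MulAction Γ V] {T : SimpleGraph V}
    (hT : T.IsTree)
    (hadj : ∀ (g : Γ) (u v : V), T.Adj u v → T.Adj (g • u) (g • v))
    {a b : V} (hab : T.Adj a b) :
    ∀ (L : List (Bool × Γ)), L.Chain' (fun p q => p.1 ≠ q.1) →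
    (∀ p ∈ L, (p.1 = true → p.2 • a = a ∧ p.2 • b ≠ b) ∧
              (p.1 = false → p.2 • a = b ∧ p.2 • b = a)) →
    (T.dist a ((L.map Prod.snd).prod • a) = (L.map Prod.fst).count false ∧
     (L.getLast?.map Prod.fst = some false →
        T.dist a ((L.map Prod.snd).prod • b) + 1 = (L.map Prod.fst).count false) ∧
     (L.getLast?.map Prod.fst ≠ some false →
        T.dist a ((L.map Prod.snd).prod • b) = (L.map Prod.fst).count false + 1)) := by
  intro L
  induction L using List.reverseRecOn with
  | nil =>
    intro _ _
    refine ⟨by simp, ?_, ?_⟩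
    · intro h; simp at h
    · intro _
      simpa using SimpleGraph.dist_eq_one_iff_adj.2 hab
  | append_singleton L p ih =>
    intro hchain hmem
    obtain ⟨hcL, _, hrel⟩ := List.isChain_append.mp hchain
    obtain ⟨ih1, ih2, ih3⟩ := ih hcL (fun q hq => hmem q (List.mem_append_left _ hq))
    have hpmem := hmem p (List.mem_append_right _ (List.mem_singleton_self p))
    have e1 : ((L ++ [p]).map Prod.snd).prod = (L.map Prod.snd).prod * p.2 := by simp
    have e3 : (L ++ [p]).getLast? = some p := by simp
    set γ := (L.map Prod.snd).prod with hγ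
    set m := (L.map Prod.fst).count false with hm
    cases hp1 : p.1 with
    | false =>
      obtain ⟨hpa, hpb⟩ := hpmem.2 hp1
      have e2 : ((L ++ [p]).map Prod.fst).count false = m + 1 := by
        simp [List.count_append, hp1, hm]
      have key3 : L.getLast?.map Prod.fst ≠ some false := by
        cases hL : L.getLast? with
        | none => simp
        | some q =>
          simp only [Option.map_some, ne_eq, Option.some.injEq]
          intro h
          exact hrel q (by simp [hL]) p (by simp) (h.trans hp1.symm)
      have h3 := ih3 key3
      refine ⟨?_, ?_, ?_⟩
      · rw [e1, e2, mul_smul, hpa]; exact h3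
      · intro _; rw [e1, e2, mul_smul, hpb]; omega
      · intro h
        refine absurd ?_ h
        rw [e3]
        simp [hp1]
    | true =>
      obtain ⟨hpa, hpb⟩ := hpmem.1 hp1
      have e2 : ((L ++ [p]).map Prod.fst).count false = m := by
        simp [List.count_append, hp1, hm]
      have hb' : T.Adj a (p.2 • b) := by
        have h0 := hadj p.2 a b hab; rwa [hpa] at h0
      refine ⟨?_, ?_, ?_⟩
      · rw [e1, e2, mul_smul, hpa]; exact ih1
      · intro h
        rw [e3] at h
        simp [hp1] at h
      · intro _
        rw [e1, e2, mul_smul]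
        cases hL : L.getLast? with
        | none =>
          have hLnil : L = [] := List.getLast?_eq_none_iff.mp hL
          subst hLnil
          have hγ1 : γ = 1 := by simp [hγ]
          have hm0 : m = 0 := by simp [hm]
          rw [hγ1, one_smul, hm0]
          simpa using SimpleGraph.dist_eq_one_iff_adj.2 hb'
        | some q =>
          have hq1 : q.1 = false := by
            have hq := hrel q (by simp [hL]) p (by simp)
            rw [hp1] at hq
            simpa using hq
          have h2 := ih2 (by rw [hL]; simp [hq1])
          have := tree_dist_aux hT (hadj γ a b hab) (hadj γ a (p.2 • b) hb')
            (fun hh => hpb (MulAction.injective γ hh.symm))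
            (by rw [ih1]; exact h2)
          rw [ih1] at this
          exact this

private lemma word_ne_one {V Γ : Type} [Group Γ] [MulAction Γ V] {T : SimpleGraph V}
    (hT : T.IsTree)
    (hadj : ∀ (g : Γ) (u v : V), T.Adj u v → T.Adj (g • u) (g • v))
    {a b : V} (hab : T.Adj a b)
    (h : Γ) (hha : h • a = a) (hhb : h • b = b)
    (L : List (Bool × Γ)) (hL : L ≠ [])
    (hchain : L.Chain' (fun p q => p.1 ≠ q.1))
    (hmem : ∀ p ∈ L, (p.1 = true → p.2 • a = a ∧ p.2 • b ≠ b) ∧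
              (p.1 = false → p.2 • a = b ∧ p.2 • b = a)) :
    h * (L.map Prod.snd).prod ≠ 1 := by
  intro heq
  set γ := (L.map Prod.snd).prod with hγdef
  have hγa : γ • a = a := by
    have h1 : h • (γ • a) = a := by rw [← mul_smul, heq, one_smul]
    exact MulAction.injective h (h1.trans hha.symm)
  have hγb : γ • b = b := by
    have h1 : h • (γ • b) = b := by rw [← mul_smul, heq, one_smul]
    exact MulAction.injective h (h1.trans hhb.symm)
  obtain ⟨i1, i2, i3⟩ := word_invariant hT hadj hab L hchain hmem
  rw [← hγdef, hγa, SimpleGraph.dist_self] at i1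
  have hm : (L.map Prod.fst).count false = 0 := i1.symm
  have hall : ∀ p ∈ L, p.1 = true := by
    intro p hp
    by_contra hfalse
    have hpf : p.1 = false := by simpa using hfalse
    have : false ∈ L.map Prod.fst := List.mem_map.2 ⟨p, hp, hpf⟩
    exact (List.count_eq_zero.mp hm) this
  match L, hL with
  | [p], _ =>
    have h1 := (hmem p (by simp)).1 (hall p (by simp))
    apply h1.2
    have : γ = p.2 := by simp [hγdef]
    rw [← this]
    exact hγb
  | p :: q :: rest, _ =>
    simp only [List.Chain', List.isChain_cons_cons] at hchain
    exact hchain.1 ((hall p (by simp)).trans (hall q (by simp)).symm)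

private lemma pushout_lift_injective {ι : Type} {G : ι → Type} [∀ i, Group (G i)]
    {H K : Type} [Group H] [Group K] {φ : ∀ i, H →* G i}
    (hφ : ∀ i, Function.Injective (φ i)) (f : ∀ i, G i →* K) (k : H →* K)
    (hcomp : ∀ i, (f i).comp (φ i) = k) (hk : Function.Injective k)
    (hping : ∀ (h : H) (L : List (Σ i, G i)), L ≠ [] →
      (L.Chain' fun p q => p.1 ≠ q.1) →
      (∀ p ∈ L, p.2 ∉ (φ p.1).range) →
      k h * (L.map fun p => f p.1 p.2).prod ≠ 1) :
    Function.Injective (Monoid.PushoutI.lift f k hcomp) := by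
  classical
  rw [injective_iff_map_eq_one]
  intro x hx
  obtain ⟨d⟩ := Monoid.PushoutI.NormalWord.transversal_nonempty φ hφ
  set w := x • (Monoid.PushoutI.NormalWord.empty : Monoid.PushoutI.NormalWord d) with hw
  have hxw : w.prod = x := by
    rw [hw, Monoid.PushoutI.NormalWord.prod_smul, Monoid.PushoutI.NormalWord.prod_empty, mul_one]
  have hlift : Monoid.PushoutI.lift f k hcomp x
      = k w.head * (w.toList.map fun p => f p.1 p.2).prod := by
    rw [← hxw]
    show Monoid.PushoutI.lift f k hcomp (Monoid.PushoutI.base φ w.head *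
      Monoid.PushoutI.ofCoprodI (w.toWord).prod) = _
    rw [map_mul, Monoid.PushoutI.lift_base]
    congr 1
    show Monoid.PushoutI.lift f k hcomp (Monoid.PushoutI.ofCoprodI
      ((w.toList.map fun l => Monoid.CoprodI.of l.2).prod)) = _
    rw [map_list_prod, map_list_prod, List.map_map, List.map_map]
    congr 1
  rcases hList : w.toList with _ | ⟨p, rest⟩
  · have hhead : k w.head = 1 := by
      rw [hlift, hList] at hx
      simpa using hx
    have hh1 : w.head = 1 := hk (by rw [hhead, map_one])
    have hwe : w = Monoid.PushoutI.NormalWord.empty := by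
      apply Monoid.PushoutI.NormalWord.ext
      · rw [hh1]; rfl
      · rw [hList]; rfl
    rw [← hxw, hwe, Monoid.PushoutI.NormalWord.prod_empty]
  · exfalso
    refine hping w.head w.toList (by rw [hList]; simp) ?_ ?_ (by rw [← hlift]; exact hx)
    · exact w.toWord.chain_ne
    · intro l hl hlrange
      have h1 : l.2 ∈ d.set l.1 := w.normalized l.1 l.2 (by exact hl)
      have hne : l.2 ≠ 1 := w.toWord.ne_one l hl
      have h2 : l.2 ∈ ((φ l.1).range : Set (G l.1)) := hlrange
      have h3 := (d.compl l.1).1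
        (a₁ := (⟨l.2, h2⟩, ⟨1, d.one_mem l.1⟩))
        (a₂ := (⟨1, (φ l.1).range.one_mem⟩, ⟨l.2, h1⟩)) (by simp)
      apply hne
      exact congrArg (fun q => (q.1 : G l.1)) h3

private lemma stab_sup_eq_top {V Γ : Type} [Group Γ] [MulAction Γ V]
    {T : SimpleGraph V} (hT : T.IsTree)
    (hadj : ∀ (g : Γ) (u v : V), T.Adj u v → T.Adj (g • u) (g • v))
    (hedge : ∀ u v u' v' : V, T.Adj u v → T.Adj u' v' →
      ∃ g : Γ, (g • u = u' ∧ g • v = v') ∨ (g • u = v' ∧ g • v = u'))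
    {a b : V} (hab : T.Adj a b)
    {σ : Γ} (hσa : σ • a = b) (hσb : σ • b = a) :
    (MulAction.stabilizer Γ a) ⊔ (MulAction.stabilizer Γ ({a, b} : Set V)) = ⊤ := by
  classical
  set S := (MulAction.stabilizer Γ a) ⊔ (MulAction.stabilizer Γ ({a, b} : Set V)) with hS
  have hσB : σ ∈ MulAction.stabilizer Γ ({a, b} : Set V) := by
    show σ • ({a, b} : Set V) = {a, b}
    rw [Set.smul_set_insert, Set.smul_set_singleton, hσa, hσb, Set.pair_comm]
  have hσS : σ ∈ S := Subgroup.mem_sup_right hσB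
  have key : ∀ n : ℕ, ∀ v : V, T.dist a v = n → ∃ s ∈ S, s • a = v := by
    intro n
    induction n using Nat.strong_induction_on with
    | _ n ih =>
      intro v hdist
      rcases Nat.eq_zero_or_pos n with hn | hn
      · subst hn
        have : a = v := (hT.isConnected.dist_eq_zero_iff).mp hdist
        exact ⟨1, one_mem S, by rw [one_smul, this]⟩
      · have hva : v ≠ a := by
          intro hv
          rw [hv, SimpleGraph.dist_self] at hdist
          omega
        obtain ⟨p, hp, hpl⟩ := hT.isConnected.exists_path_of_dist a v
        obtain ⟨u, hvu, q, hq⟩ := p.reverse.exists_eq_cons_of_ne hva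
        have hlen : q.length + 1 = n := by
          have h1 := congrArg SimpleGraph.Walk.length hq
          rw [SimpleGraph.Walk.length_reverse, SimpleGraph.Walk.length_cons] at h1
          omega
        have hdu : T.dist a u < n := by
          have h1 : T.dist a u ≤ q.reverse.length := T.dist_le _
          rw [SimpleGraph.Walk.length_reverse] at h1
          omega
        obtain ⟨s, hsS, hsa⟩ := ih (T.dist a u) hdu u rfl
        have hac : T.Adj a (s⁻¹ • v) := by
          have h1 := hadj s⁻¹ u v hvu.symm
          rwa [← hsa, inv_smul_smul] at h1
        obtain ⟨g, hg⟩ := hedge a b a (s⁻¹ • v) hab hac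
        rcases hg with ⟨hga, hgb⟩ | ⟨hga, hgb⟩
        · have hgA : g ∈ S := Subgroup.mem_sup_left (show g ∈ MulAction.stabilizer Γ a from hga)
          refine ⟨s * g * σ, mul_mem (mul_mem hsS hgA) hσS, ?_⟩
          rw [mul_smul, mul_smul, hσa, hgb, smul_inv_smul]
        · have hgσA : g * σ ∈ S := Subgroup.mem_sup_left
            (show g * σ ∈ MulAction.stabilizer Γ a by
              show (g * σ) • a = a
              rw [mul_smul, hσa, hgb])
          have hgS : g ∈ S := by
            have h1 : (g * σ) * σ⁻¹ ∈ S := mul_mem hgσA (inv_mem hσS)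
            simpa using h1
          exact ⟨s * g, mul_mem hsS hgS, by rw [mul_smul, hga, smul_inv_smul]⟩
  rw [eq_top_iff]
  intro γ _
  obtain ⟨s, hsS, hsa⟩ := key (T.dist a (γ • a)) (γ • a) rfl
  have h1 : s⁻¹ * γ ∈ MulAction.stabilizer Γ a := by
    show (s⁻¹ * γ) • a = a
    rw [mul_smul, ← hsa, inv_smul_smul]
  have h2 : s * (s⁻¹ * γ) ∈ S := mul_mem hsS (Subgroup.mem_sup_left h1)
  simpa using h2

/-- Bass–Serre theory, amalgam case: if a group `Γ` acts on a tree `T`, transitively on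
vertices and on geometric edges, and some element swaps the endpoints `a, b` of an edge,
then `Γ` is the free product of the vertex stabilizer `Γ_a` and the setwise edge
stabilizer `Γ_{a,b}`, amalgamated along the pointwise (ordered-edge) stabilizer
`Γ_a ⊓ Γ_b`. -/
theorem amalgam_of_tree_action {V Γ : Type} [Group Γ] [MulAction Γ V]
    (T : SimpleGraph V) (hT : T.IsTree)
    (hadj : ∀ (g : Γ) (u v : V), T.Adj u v → T.Adj (g • u) (g • v))
    (hvert : ∀ u v : V, ∃ g : Γ, g • u = v)
    (hedge : ∀ u v u' v' : V, T.Adj u v → T.Adj u' v' →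
      ∃ g : Γ, (g • u = u' ∧ g • v = v') ∨ (g • u = v' ∧ g • v = u'))
    (a b : V) (hab : T.Adj a b)
    (hswap : ∃ g : Γ, g • a = b ∧ g • b = a) :
    Nonempty (Γ ≃* Monoid.PushoutI
      (G := fun i : Bool =>
        ↥(if i then MulAction.stabilizer Γ a else MulAction.stabilizer Γ ({a, b} : Set V)))
      (fun i : Bool =>
        (Subgroup.inclusion (by
          show MulAction.stabilizer Γ a ⊓ MulAction.stabilizer Γ b ≤
            (if i then MulAction.stabilizer Γ a else MulAction.stabilizer Γ ({a, b} : Set V))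
          cases i with
          | true => simp only [if_true]; exact inf_le_left
          | false =>
            simp only [Bool.false_eq_true, if_false]
            intro g hg
            have h1 : g • a = a := hg.1
            have h2 : g • b = b := hg.2
            show g • ({a, b} : Set V) = {a, b}
            rw [Set.smul_set_insert, Set.smul_set_singleton, h1, h2]) :
          ↥(MulAction.stabilizer Γ a ⊓ MulAction.stabilizer Γ b) →*
          ↥(if i then MulAction.stabilizer Γ a
            else MulAction.stabilizer Γ ({a, b} : Set V))))) := by
  classical
  obtain ⟨σ, hσa, hσb⟩ := hswap
  have hne : a ≠ b := hab.ne
  refine ⟨(MulEquiv.ofBijective (Monoid.PushoutI.lift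
      (fun i : Bool => Subgroup.subtype
        (if i then MulAction.stabilizer Γ a else MulAction.stabilizer Γ ({a, b} : Set V)))
      (Subgroup.subtype (MulAction.stabilizer Γ a ⊓ MulAction.stabilizer Γ b))
      ?_) ⟨?_, ?_⟩).symm⟩
  · intro i
    ext x
    rfl
  · -- injectivity
    refine pushout_lift_injective (fun i => Subgroup.inclusion_injective _) _ _ _
      (Subgroup.subtype_injective _) ?_
    intro h L hLne hchain hrange
    set L' : List (Bool × Γ) := L.map (fun p => (p.1, (p.2 : Γ))) with hL'
    have hconv : (L.map fun p => (Subgroup.subtype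
        (if p.1 then MulAction.stabilizer Γ a else MulAction.stabilizer Γ ({a, b} : Set V))) p.2).prod
        = (L'.map Prod.snd).prod := by
      rw [hL', List.map_map]
      rfl
    show _ * _ ≠ 1
    rw [hconv]
    have hha : (h : Γ) • a = a := h.2.1
    have hhb : (h : Γ) • b = b := h.2.2
    refine word_ne_one hT hadj hab (h : Γ) hha hhb L' (by simpa [hL'] using hLne) ?_ ?_
    · simp only [hL', List.Chain', List.isChain_map]
      exact hchain
    · intro pr hpr
      rw [hL'] at hpr
      obtain ⟨p, hpL, rfl⟩ := List.mem_map.1 hpr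
      obtain ⟨i, g⟩ := p
      cases i with
      | true =>
        refine ⟨fun _ => ⟨g.2, ?_⟩, fun hfalse => by simp at hfalse⟩
        intro hgb
        exact hrange ⟨true, g⟩ hpL ⟨⟨(g : Γ), ⟨g.2, hgb⟩⟩, Subtype.ext rfl⟩
      | false =>
        refine ⟨fun htrue => by simp at htrue, fun _ => ?_⟩
        have hmemB : (g : Γ) • ({a, b} : Set V) = {a, b} := g.2
        have h1 : (g : Γ) • a ∈ ({a, b} : Set V) := by
          have hx : (g : Γ) • a ∈ (g : Γ) • ({a, b} : Set V) :=
            Set.smul_mem_smul_set (by simp)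
          rwa [hmemB] at hx
        have h2 : (g : Γ) • b ∈ ({a, b} : Set V) := by
          have hx : (g : Γ) • b ∈ (g : Γ) • ({a, b} : Set V) :=
            Set.smul_mem_smul_set (by simp)
          rwa [hmemB] at hx
        have hnot : ¬((g : Γ) • a = a ∧ (g : Γ) • b = b) := by
          rintro ⟨hx, hy⟩
          exact hrange ⟨false, g⟩ hpL ⟨⟨(g : Γ), ⟨hx, hy⟩⟩, Subtype.ext rfl⟩
        simp only [Set.mem_insert_iff, Set.mem_singleton_iff] at h1 h2
        rcases h1 with h1 | h1
        · rcases h2 with h2 | h2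
          · exact absurd (MulAction.injective (g : Γ) (h1.trans h2.symm)) hne
          · exact absurd ⟨h1, h2⟩ hnot
        · rcases h2 with h2 | h2
          · exact ⟨h1, h2⟩
          · exact absurd (MulAction.injective (g : Γ) (h1.trans h2.symm)) hne
  · -- surjectivity
    have htop := stab_sup_eq_top hT hadj hedge hab hσa hσb
    rw [← MonoidHom.range_eq_top, eq_top_iff, ← htop]
    apply sup_le
    · intro y hy
      refine MonoidHom.mem_range.mpr ⟨Monoid.PushoutI.of true
        ⟨y, (show y ∈ (if (true : Bool) then MulAction.stabilizer Γ a
            else MulAction.stabilizer Γ ({a, b} : Set V)) from hy)⟩, ?_⟩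
      rw [Monoid.PushoutI.lift_of]
      rfl
    · intro y hy
      refine MonoidHom.mem_range.mpr ⟨Monoid.PushoutI.of false
        ⟨y, (show y ∈ (if (false : Bool) then MulAction.stabilizer Γ a
            else MulAction.stabilizer Γ ({a, b} : Set V)) from hy)⟩, ?_⟩
      rw [Monoid.PushoutI.lift_of]
      rfl
end

section
/- Suppose a group G acts on a tree T without inversion, transitively on vertices and transitively on oriented edges in the sense that there is exactly one orbit of geometric edges and no element of G swaps the endpoints of any edge. Then for a vertex v and an edge e incident to v, G is isomorphic to the HNN extension of the vertex stabilizer G_v over the edge stabilizer G_e. -/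
namespace HNNTreeAux
open SimpleGraph

lemma getVert_map {V V' : Type} {G : SimpleGraph V} {G' : SimpleGraph V'} (f : G →g G')
    {a b : V} (p : G.Walk a b) (i : ℕ) : (p.map f).getVert i = f (p.getVert i) := by
  induction p generalizing i with
  | nil => simp [Walk.getVert]
  | cons h q ih =>
    cases i with
    | zero => simp
    | succ n => simpa using ih n

lemma eq_getVert_one {V : Type} {G : SimpleGraph V} {a b c : V} {p : G.Walk a b}
    (hp : p.IsPath) (he : s(a, c) ∈ p.edges) : c = p.getVert 1 := by
  cases p with
  | nil => simp at he
  | @cons _ x _ h q =>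
    rw [Walk.edges_cons, List.mem_cons] at he
    rcases he with he | he
    · rw [Walk.getVert_cons_succ, Walk.getVert_zero]
      rw [Sym2.eq_iff] at he
      rcases he with ⟨-, rfl⟩ | ⟨rfl, rfl⟩
      · rfl
      · exact absurd rfl h.ne
    · exact absurd (q.fst_mem_support_of_mem_edges he)
        ((Walk.cons_isPath_iff h q).mp hp).2

lemma cons_isPath {V : Type} [DecidableEq V] {G : SimpleGraph V} (hac : G.IsAcyclic) {a b c : V}
    {p : G.Walk a b} (hp : p.IsPath) (h : G.Adj c a) (hc : c ≠ p.getVert 1) :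
    (Walk.cons h p).IsPath := by
  rw [Walk.cons_isPath_iff]
  refine ⟨hp, fun hcsup => ?_⟩
  refine hac _ ((Walk.cons_isCycle_iff (p.takeUntil c hcsup) h).mpr
    ⟨hp.takeUntil hcsup, fun hedge => hc ?_⟩)
  refine eq_getVert_one hp (Walk.edges_takeUntil_subset p hcsup ?_)
  rwa [Sym2.eq_swap] at hedge

section WordWalk

variable {V Γ : Type} [Group Γ] [MulAction Γ V]

/-- The group element represented by a list of letters. -/
def wordProd (v : V) (t : Γ) (l : List (ℤˣ × ↥(MulAction.stabilizer Γ v))) : Γ :=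
  (l.map fun x => (t⁻¹) ^ ((x.1 : ℤ)) * (x.2 : Γ)).prod

lemma word_walk [DecidableEq V] (T : SimpleGraph V) (hac : T.IsAcyclic)
    (hadj : ∀ (g : Γ) (u v : V), T.Adj u v → T.Adj (g • u) (g • v))
    (hnoinv : ∀ (g : Γ) (u v : V), T.Adj u v → ¬(g • u = v ∧ g • v = u))
    (v w : V) (t : Γ) (hvw : T.Adj v w) (ht : t • v = w)
    (l : List (ℤˣ × ↥(MulAction.stabilizer Γ v)))
    (hchain : l.Chain' (fun a b =>
      (a.2 : Γ) ∈ MulAction.stabilizer Γ (if a.1 = 1 then w else t⁻¹ • v) → a.1 = b.1)) :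
    ∃ p : T.Walk v ((wordProd v t l) • v), p.IsPath ∧ (l = [] → p.length = 0) ∧
      ∀ x ∈ l.head?, p.getVert 1 = (t⁻¹) ^ ((x.1 : ℤ)) • v := by
  have htw : t⁻¹ • w = v := by rw [← ht, inv_smul_smul]
  have hadjv' : T.Adj v (t⁻¹ • v) := by
    have := hadj t⁻¹ w v hvw.symm
    rwa [htw] at this
  induction l with
  | nil =>
    rw [show wordProd v t ([] : List (ℤˣ × ↥(MulAction.stabilizer Γ v))) • v = v by
      simp [wordProd]]
    exact ⟨Walk.nil, Walk.IsPath.nil, fun _ => rfl, by simp⟩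
  | cons a l' ih =>
    obtain ⟨u, g⟩ := a
    obtain ⟨q, hq_path, hq_len, hq_gv⟩ := ih hchain.tail
    set h : Γ := (t⁻¹) ^ ((u : ℤ)) * (g : Γ) with hh
    have hgv : (g : Γ) • v = v := g.2
    have hhv : h • v = (t⁻¹) ^ ((u : ℤ)) • v := by rw [hh, mul_smul, hgv]
    have hadjh : T.Adj v (h • v) := by
      rw [hhv]
      rcases Int.units_eq_one_or u with rfl | rfl
      · simpa using hadjv'
      · simpa [zpow_neg, ht] using hvw
    have hprod : wordProd v t ((u, g) :: l') • v = h • (wordProd v t l' • v) := by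
      rw [wordProd, List.map_cons, List.prod_cons, mul_smul]
      rfl
    rw [hprod]
    -- map the walk by h
    have hinj : Function.Injective (fun x : V => h • x) := MulAction.injective h
    let f : T →g T := ⟨fun x => h • x, fun {x y} hxy => hadj h x y hxy⟩
    let q' : T.Walk (h • v) (h • (wordProd v t l' • v)) := q.map f
    have hq'_path : q'.IsPath := Walk.map_isPath_of_injective hinj hq_path
    have hq'_gv : q'.getVert 1 = h • q.getVert 1 := getVert_map f q 1
    have hne : v ≠ q'.getVert 1 := by
      rw [hq'_gv]
      rcases l' with _ | ⟨⟨u', g'⟩, l''⟩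
      · -- q has length 0, so q.getVert 1 = wordProd [] • v = v
        have h0 : q.getVert 1 = wordProd v t ([] : List (ℤˣ × ↥(MulAction.stabilizer Γ v))) • v :=
          q.getVert_of_length_le (by rw [hq_len rfl]; norm_num)
        rw [h0, show wordProd v t ([] : List (ℤˣ × ↥(MulAction.stabilizer Γ v))) • v = v by
          simp [wordProd]]
        exact hadjh.ne
      · have hqh : q.getVert 1 = (t⁻¹) ^ ((u' : ℤ)) • v := hq_gv _ rfl
        rw [hqh]
        have hrel : (g : Γ) ∈ MulAction.stabilizer Γ (if u = 1 then w else t⁻¹ • v) → u = u' :=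
          (List.isChain_cons_cons.mp hchain).1
        intro hcontra
        have hkey : (g : Γ) • ((t⁻¹) ^ ((u' : ℤ)) • v) = ((t⁻¹) ^ ((u : ℤ)))⁻¹ • v := by
          rw [hh, mul_smul] at hcontra
          exact (smul_eq_iff_eq_inv_smul _).mp hcontra.symm
        rcases Int.units_eq_one_or u with rfl | rfl <;>
          rcases Int.units_eq_one_or u' with rfl | rfl <;>
            simp only [Units.val_one, Units.val_neg, zpow_one, zpow_neg, inv_inv, ht] at hkey
        · -- u = 1, u' = 1 : g • (t⁻¹ • v) = w, inversion of edge (v, t⁻¹ • v)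
          refine hnoinv (t⁻¹ * (g : Γ)) v (t⁻¹ • v) hadjv' ⟨?_, ?_⟩
          · rw [mul_smul, hgv]
          · rw [mul_smul, hkey, htw]
        · -- u = 1, u' = -1 : g stabilizes w
          have := hrel (by simpa [MulAction.mem_stabilizer_iff] using hkey)
          exact absurd this (by decide)
        · -- u = -1, u' = 1 : g stabilizes t⁻¹ • v
          have := hrel (by simpa [MulAction.mem_stabilizer_iff] using hkey)
          exact absurd this (by decide)
        · -- u = -1, u' = -1 : g • w = t⁻¹ • v, inversion of edge (v, w)
          refine hnoinv (t * (g : Γ)) v w hvw ⟨?_, ?_⟩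
          · rw [mul_smul, hgv, ht]
          · rw [mul_smul, hkey, smul_inv_smul]
    refine ⟨Walk.cons hadjh q', cons_isPath hac hq'_path hadjh hne, by simp, ?_⟩
    intro x hx
    rw [List.head?_cons, Option.mem_some_iff] at hx
    subst hx
    rw [Walk.getVert_cons_succ, Walk.getVert_zero, hhv]

lemma word_walk_ne [DecidableEq V] (T : SimpleGraph V) (hac : T.IsAcyclic)
    (hadj : ∀ (g : Γ) (u v : V), T.Adj u v → T.Adj (g • u) (g • v))
    (hnoinv : ∀ (g : Γ) (u v : V), T.Adj u v → ¬(g • u = v ∧ g • v = u))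
    (v w : V) (t : Γ) (hvw : T.Adj v w) (ht : t • v = w)
    (l : List (ℤˣ × ↥(MulAction.stabilizer Γ v))) (hl : l ≠ [])
    (hchain : l.Chain' (fun a b =>
      (a.2 : Γ) ∈ MulAction.stabilizer Γ (if a.1 = 1 then w else t⁻¹ • v) → a.1 = b.1)) :
    (wordProd v t l) • v ≠ v := by
  obtain ⟨p, hp_path, -, hp_gv⟩ := word_walk T hac hadj hnoinv v w t hvw ht l hchain
  intro heq
  rcases l with _ | ⟨⟨u, g⟩, l'⟩
  · exact hl rfl
  have hg1 : p.getVert 1 = (t⁻¹) ^ ((u : ℤ)) • v := hp_gv _ rfl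
  have hne : v ≠ (t⁻¹) ^ ((u : ℤ)) • v := by
    have htw : t⁻¹ • w = v := by rw [← ht, inv_smul_smul]
    rcases Int.units_eq_one_or u with rfl | rfl
    · have h2 := hadj t⁻¹ w v hvw.symm
      rw [htw] at h2
      simpa using h2.ne
    · simpa [zpow_neg, ht] using hvw.ne
  have hnil : (⟨p.copy rfl heq, (p.isPath_copy rfl heq).mpr hp_path⟩ : T.Path v v) = Path.nil :=
    Path.loop_eq _
  have hlen : p.length = 0 := by
    have h3 := congrArg (fun q : T.Path v v => (q : T.Walk v v).length) hnil
    simpa [Walk.length_copy] using h3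
  have h4 : p.getVert 1 = wordProd v t ((u, g) :: l') • v :=
    p.getVert_of_length_le (by rw [hlen]; norm_num)
  exact hne ((hg1.symm.trans h4).trans heq).symm

end WordWalk
end HNNTreeAux

/-- Bass–Serre theory, HNN case: if a group `Γ` acts on a tree without inversions,
transitively on vertices, with a single orbit of geometric edges and no element swapping
the endpoints of any edge, then for a vertex `v` and an edge `{v, w}` incident to it,
`Γ` is an HNN extension of the vertex stabilizer `Γ_v` over the edge stabilizer
`Γ_v ∩ Γ_w` (viewed as a subgroup of `Γ_v`). -/
theorem hnn_of_tree_action {V Γ : Type} [Group Γ] [MulAction Γ V]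
    (T : SimpleGraph V) (hT : T.IsTree)
    (hadj : ∀ (g : Γ) (u v : V), T.Adj u v → T.Adj (g • u) (g • v))
    (hnoinv : ∀ (g : Γ) (u v : V), T.Adj u v → ¬(g • u = v ∧ g • v = u))
    (hvert : ∀ u v : V, ∃ g : Γ, g • u = v)
    (hedge : ∀ u v u' v' : V, T.Adj u v → T.Adj u' v' →
      ∃ g : Γ, (g • u = u' ∧ g • v = v') ∨ (g • u = v' ∧ g • v = u'))
    (v w : V) (hvw : T.Adj v w) :
    ∃ (B : Subgroup ↥(MulAction.stabilizer Γ v))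
      (φ : ↥((MulAction.stabilizer Γ w).comap (MulAction.stabilizer Γ v).subtype) ≃* ↥B),
      Nonempty (Γ ≃* HNNExtension ↥(MulAction.stabilizer Γ v)
        ((MulAction.stabilizer Γ w).comap (MulAction.stabilizer Γ v).subtype) B φ) := by
  classical
  obtain ⟨t, ht⟩ := hvert v w
  have htw : t⁻¹ • w = v := by rw [← ht, inv_smul_smul]
  set C : Subgroup ↥(MulAction.stabilizer Γ v) :=
    (MulAction.stabilizer Γ w).comap (MulAction.stabilizer Γ v).subtype with hC
  set B : Subgroup ↥(MulAction.stabilizer Γ v) :=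
    (MulAction.stabilizer Γ (t⁻¹ • v)).comap (MulAction.stabilizer Γ v).subtype with hB
  have memC : ∀ x : ↥(MulAction.stabilizer Γ v), x ∈ C ↔ (x : Γ) • w = w := by
    intro x
    rw [hC, Subgroup.mem_comap, Subgroup.coe_subtype, MulAction.mem_stabilizer_iff]
  have memB : ∀ x : ↥(MulAction.stabilizer Γ v), x ∈ B ↔ (x : Γ) • (t⁻¹ • v) = t⁻¹ • v := by
    intro x
    rw [hB, Subgroup.mem_comap, Subgroup.coe_subtype, MulAction.mem_stabilizer_iff]
  -- the isomorphism φ : C ≃* B given by conjugation by t⁻¹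
  refine ⟨B, ?_⟩
  have hφA : ∀ c : ↥C, t⁻¹ * ((c : ↥(MulAction.stabilizer Γ v)) : Γ) * t ∈
      MulAction.stabilizer Γ v := by
    intro c
    have h2 : ((c : ↥(MulAction.stabilizer Γ v)) : Γ) • w = w := (memC _).mp c.2
    rw [MulAction.mem_stabilizer_iff, mul_smul, mul_smul, ht, h2, htw]
  have hφB : ∀ c : ↥C, (⟨t⁻¹ * ((c : ↥(MulAction.stabilizer Γ v)) : Γ) * t, hφA c⟩ :
      ↥(MulAction.stabilizer Γ v)) ∈ B := by
    intro c
    have h1 : ((c : ↥(MulAction.stabilizer Γ v)) : Γ) • v = v := c.1.2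
    rw [memB]
    show (t⁻¹ * _ * t) • (t⁻¹ • v) = t⁻¹ • v
    rw [mul_smul, mul_smul, smul_inv_smul, h1]
  have hφA' : ∀ b : ↥B, t * ((b : ↥(MulAction.stabilizer Γ v)) : Γ) * t⁻¹ ∈
      MulAction.stabilizer Γ v := by
    intro b
    have h2 : ((b : ↥(MulAction.stabilizer Γ v)) : Γ) • (t⁻¹ • v) = t⁻¹ • v := (memB _).mp b.2
    rw [MulAction.mem_stabilizer_iff, mul_smul, mul_smul, h2, smul_inv_smul]
  have hφC' : ∀ b : ↥B, (⟨t * ((b : ↥(MulAction.stabilizer Γ v)) : Γ) * t⁻¹, hφA' b⟩ :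
      ↥(MulAction.stabilizer Γ v)) ∈ C := by
    intro b
    have h1 : ((b : ↥(MulAction.stabilizer Γ v)) : Γ) • v = v := b.1.2
    rw [memC]
    show (t * _ * t⁻¹) • w = w
    rw [mul_smul, mul_smul, htw, h1, ht]
  let φ : ↥C ≃* ↥B :=
    { toFun := fun c => ⟨⟨t⁻¹ * ((c : ↥(MulAction.stabilizer Γ v)) : Γ) * t, hφA c⟩, hφB c⟩
      invFun := fun b => ⟨⟨t * ((b : ↥(MulAction.stabilizer Γ v)) : Γ) * t⁻¹, hφA' b⟩, hφC' b⟩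
      left_inv := fun c => Subtype.ext (Subtype.ext (by push_cast; group))
      right_inv := fun b => Subtype.ext (Subtype.ext (by push_cast; group))
      map_mul' := fun c₁ c₂ => Subtype.ext (Subtype.ext (by push_cast; group)) }
  refine ⟨φ, ?_⟩
  -- the homomorphism ψ : HNNExtension → Γ
  let ψ : HNNExtension ↥(MulAction.stabilizer Γ v) C B φ →* Γ :=
    HNNExtension.lift (MulAction.stabilizer Γ v).subtype t⁻¹ (by
      intro a
      show t⁻¹ * _ = ((φ a : ↥(MulAction.stabilizer Γ v)) : Γ) * t⁻¹
      show t⁻¹ * ((a : ↥(MulAction.stabilizer Γ v)) : Γ) =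
        (t⁻¹ * ((a : ↥(MulAction.stabilizer Γ v)) : Γ) * t) * t⁻¹
      group)
  have ψof : ∀ g : ↥(MulAction.stabilizer Γ v), ψ (HNNExtension.of g) = (g : Γ) :=
    fun g => HNNExtension.lift_of _ _ _ g
  have ψt : ψ HNNExtension.t = t⁻¹ := HNNExtension.lift_t _ _ _
  have hAr : ∀ g : Γ, g ∈ MulAction.stabilizer Γ v → g ∈ ψ.range :=
    fun g hg => ⟨HNNExtension.of ⟨g, hg⟩, ψof _⟩
  have htr' : t⁻¹ ∈ ψ.range := ⟨HNNExtension.t, ψt⟩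
  have htr : t ∈ ψ.range := by simpa using ψ.range.inv_mem htr'
  -- surjectivity
  have key : ∀ (a b : V) (p : T.Walk a b), b = v → ∃ g ∈ ψ.range, g • v = a := by
    intro a b p
    induction p with
    | nil => intro hb; exact ⟨1, one_mem _, by rw [one_smul, hb]⟩
    | @cons a y b hadj' q ih =>
      intro hb
      obtain ⟨g, hgr, hgv⟩ := ih hb
      have hinv : g⁻¹ • y = v := by rw [← hgv, inv_smul_smul]
      have hadj2 : T.Adj v (g⁻¹ • a) := by
        have h5 := hadj g⁻¹ a y hadj'
        rw [hinv] at h5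
        exact h5.symm
      obtain ⟨k, hk | hk⟩ := hedge v w v (g⁻¹ • a) hvw hadj2
      · refine ⟨g * k * t, mul_mem (mul_mem hgr (hAr k hk.1)) htr, ?_⟩
        rw [mul_smul, mul_smul, ht, hk.2, smul_inv_smul]
      · have hkt : k * t ∈ MulAction.stabilizer Γ v := by
          rw [MulAction.mem_stabilizer_iff, mul_smul, ht, hk.2]
        have hkr : k ∈ ψ.range := by
          have h2 : k = (k * t) * t⁻¹ := by group
          rw [h2]
          exact mul_mem (hAr _ hkt) htr'
        refine ⟨g * k, mul_mem hgr hkr, ?_⟩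
        rw [mul_smul, hk.1, smul_inv_smul]
  have hsurj : Function.Surjective ψ := by
    intro γ
    obtain ⟨p⟩ := hT.isConnected.preconnected (γ • v) v
    obtain ⟨g, hgr, hgv⟩ := key (γ • v) v p rfl
    have hst : g⁻¹ * γ ∈ MulAction.stabilizer Γ v := by
      rw [MulAction.mem_stabilizer_iff, mul_smul, ← hgv, inv_smul_smul]
    have hγ : γ ∈ ψ.range := by
      have h2 : γ = g * (g⁻¹ * γ) := by group
      rw [h2]
      exact mul_mem hgr (hAr _ hst)
    exact hγ
  -- injectivity
  have hinj : Function.Injective ψ := by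
    rw [injective_iff_map_eq_one]
    intro x hx
    obtain ⟨d⟩ : Nonempty (HNNExtension.NormalWord.TransversalPair ↥(MulAction.stabilizer Γ v) C B) :=
      inferInstance
    set nw := x • (HNNExtension.NormalWord.empty : HNNExtension.NormalWord d) with hnw
    have hprodx : nw.prod φ = x := by
      rw [hnw, HNNExtension.NormalWord.prod_smul, HNNExtension.NormalWord.prod_empty, mul_one]
    have hcomp : ∀ y : ℤˣ × ↥(MulAction.stabilizer Γ v),
        ψ (HNNExtension.t ^ ((y.1 : ℤ)) * HNNExtension.of y.2) =
          (t⁻¹) ^ ((y.1 : ℤ)) * (y.2 : Γ) := by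
      intro y
      rw [map_mul, map_zpow, ψt, ψof]
    have hψx : (nw.head : Γ) * HNNTreeAux.wordProd v t nw.toList = 1 := by
      have e1 : ψ (nw.prod φ) = (nw.head : Γ) * HNNTreeAux.wordProd v t nw.toList := by
        rw [HNNExtension.NormalWord.ReducedWord.prod, map_mul, map_list_prod, List.map_map, ψof,
          HNNTreeAux.wordProd]
        congr 1
        simp only [Function.comp_def, hcomp]
      rw [← e1, hprodx, hx]
    have hfix : HNNTreeAux.wordProd v t nw.toList • v = v := by
      have heq : HNNTreeAux.wordProd v t nw.toList = ((nw.head : Γ))⁻¹ := by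
        rw [show HNNTreeAux.wordProd v t nw.toList =
          ((nw.head : Γ))⁻¹ * ((nw.head : Γ) * HNNTreeAux.wordProd v t nw.toList) by group,
          hψx, mul_one]
      rw [heq]
      exact (MulAction.mem_stabilizer_iff).mp (inv_mem nw.head.2)
    have hchain' : nw.toList.Chain' (fun a b =>
        (a.2 : Γ) ∈ MulAction.stabilizer Γ (if a.1 = 1 then w else t⁻¹ • v) → a.1 = b.1) := by
      refine nw.chain.imp ?_
      rintro ⟨u, g⟩ ⟨u', g'⟩ hR hmem
      dsimp only at hR hmem ⊢
      apply hR
      rcases Int.units_eq_one_or u with rfl | rfl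
      · rw [if_pos rfl] at hmem
        rw [HNNExtension.toSubgroup_one]
        exact (memC g).mpr hmem
      · rw [if_neg (by decide)] at hmem
        rw [HNNExtension.toSubgroup_neg_one]
        exact (memB g).mpr hmem
    by_cases hnil : nw.toList = []
    · have hx1 : x = HNNExtension.of nw.head := by
        rw [← hprodx, HNNExtension.NormalWord.ReducedWord.prod, hnil]
        simp
      have hhead : (nw.head : Γ) = 1 := by
        rw [hx1, ψof] at hx
        exact hx
      rw [hx1, show nw.head = 1 from Subtype.ext hhead, map_one]
    · exact absurd hfix (HNNTreeAux.word_walk_ne T hT.IsAcyclic hadj hnoinv v w t hvw ht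
        nw.toList hnil hchain')
  exact ⟨(MulEquiv.ofBijective ψ ⟨hinj, hsurj⟩).symm⟩
end

section
/- In the free group F = ⟨x, y⟩, the element w = (x y^5)^4 · x y^4 is a primitive element of F (i.e., is part of a basis of F). -/
/-- A primitive element of the free group of rank 2: a member of some free basis,
equivalently the image of a generator under an automorphism. -/
def IsPrimitive (w : FreeGroup (Fin 2)) : Prop :=
  ∃ φ : FreeGroup (Fin 2) ≃* FreeGroup (Fin 2), φ (FreeGroup.of 0) = w

private def X : FreeGroup (Fin 2) := FreeGroup.of 0
private def Y : FreeGroup (Fin 2) := FreeGroup.of 1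

/-- Forward automorphism: x ↦ (x y⁵)⁵ y⁻¹, y ↦ x y⁵. -/
private def Φf : FreeGroup (Fin 2) →* FreeGroup (Fin 2) :=
  FreeGroup.lift ![(X * Y ^ 5) ^ 5 * Y⁻¹, X * Y ^ 5]

/-- Inverse automorphism: x ↦ y (y⁻⁵ x)⁵, y ↦ x⁻¹ y⁵. -/
private def Φg : FreeGroup (Fin 2) →* FreeGroup (Fin 2) :=
  FreeGroup.lift ![Y * ((Y ^ 5)⁻¹ * X) ^ 5, X⁻¹ * Y ^ 5]

private lemma gf : Φg.comp Φf = MonoidHom.id _ := by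
  apply FreeGroup.ext_hom
  intro a
  fin_cases a <;>
    simp [Φf, Φg, X, Y, map_mul, map_pow, map_inv] <;>
    rw [show ((FreeGroup.of 0 : FreeGroup (Fin 2)))⁻¹ * FreeGroup.of 1 ^ (5 : ℕ) =
        (((FreeGroup.of 1 : FreeGroup (Fin 2)) ^ (5 : ℕ))⁻¹ * FreeGroup.of 0)⁻¹ from by group,
      inv_pow, mul_inv_cancel_right] <;> group

private lemma fg : Φf.comp Φg = MonoidHom.id _ := by
  apply FreeGroup.ext_hom
  intro a
  fin_cases a <;>
    simp [Φf, Φg, X, Y, map_mul, map_pow, map_inv]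

/-- In the free group on `x = of 0`, `y = of 1`, the element `(x y^5)^4 · x y^4` is
primitive. -/
theorem primitive_xy5_pow4_xy4 :
    IsPrimitive ((FreeGroup.of 0 * FreeGroup.of 1 ^ (5 : ℕ)) ^ (4 : ℕ) *
      FreeGroup.of 0 * (FreeGroup.of 1 : FreeGroup (Fin 2)) ^ (4 : ℕ)) := by
  refine ⟨Φf.toMulEquiv Φg gf fg, ?_⟩
  show Φf (FreeGroup.of 0) = _
  simp only [Φf, X, Y, FreeGroup.lift_apply_of, Fin.isValue, Matrix.cons_val_zero]
  have h : ((FreeGroup.of 0 : FreeGroup (Fin 2)) * FreeGroup.of 1 ^ (5 : ℕ)) ^ (5 : ℕ) =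
      (FreeGroup.of 0 * FreeGroup.of 1 ^ (5 : ℕ)) ^ (4 : ℕ) *
      (FreeGroup.of 0 * FreeGroup.of 1 ^ (5 : ℕ)) := by
    rw [← pow_succ]
  rw [h]
  group
end

section
/- Let p = qm + r with q ≥ 4, 2 ≤ r ≤ q - 2, gcd(p, q) = 1. Consider the set S of integers obtained from the pair (r + q, r) by the following inductive rule generating a binary tree: the root pairs are n_{left} = r + q and n_{right} = r, value of the merge of two adjacent values n₁, n₂ is n₁ + n₂ - q (this is the Stern–Brocot-like mediant construction from the principal complex). Then some value of the form produced by finitely many such operations equals q + 1 or q - 1. -/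
/-- The pairs of adjacent labels in the binary tree generated from the root pair
`(r + q, r)` by the rule that merging adjacent labels `n₁, n₂` produces the new label
`n₁ + n₂ - q`, inserted between them. -/
inductive MediantPairs (q r : ℤ) : ℤ × ℤ → Prop
  | root : MediantPairs q r (r + q, r)
  | left {n₁ n₂ : ℤ} : MediantPairs q r (n₁, n₂) → MediantPairs q r (n₁, n₁ + n₂ - q)
  | right {n₁ n₂ : ℤ} : MediantPairs q r (n₁, n₂) → MediantPairs q r (n₁ + n₂ - q, n₂)


/-- Stern–Brocot coefficient pairs. -/
inductive SBPairs : ℕ × ℕ → ℕ × ℕ → Prop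
  | root : SBPairs (1, 0) (0, 1)
  | left {a b c d : ℕ} : SBPairs (a, b) (c, d) → SBPairs (a, b) (a + c, b + d)
  | right {a b c d : ℕ} : SBPairs (a, b) (c, d) → SBPairs (a + c, b + d) (c, d)

lemma sb_of_det (N : ℕ) : ∀ a b c d : ℕ, a + b + c + d ≤ N → a * d = b * c + 1 →
    SBPairs (a, b) (c, d) := by
  induction N with
  | zero =>
    intro a b c d h hd
    have ha : a = 0 := by omega
    subst ha; simp at hd
  | succ N ih =>
    intro a b c d h hd
    by_cases hbc : b = 0 ∧ c = 0
    · obtain ⟨hb, hc⟩ := hbc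
      subst hb; subst hc
      simp at hd
      obtain ⟨ha, hd'⟩ := hd
      subst ha; subst hd'
      exact SBPairs.root
    · have hcomp : (a ≤ c ∧ b ≤ d) ∨ (c ≤ a ∧ d ≤ b) := by
        rcases le_or_gt a c with h1 | h1 <;> rcases le_or_gt b d with h2 | h2
        · exact Or.inl ⟨h1, h2⟩
        · rcases eq_or_lt_of_le h1 with he | hlt
          · right; omega
          · exfalso
            have hm := Nat.mul_le_mul (show a + 1 ≤ c by omega) (show d + 1 ≤ b by omega)
            nlinarith
        · rcases eq_or_lt_of_le h2 with he | hlt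
          · right; omega
          · exfalso
            have hm := Nat.mul_le_mul (show c + 1 ≤ a by omega) (show b + 1 ≤ d by omega)
            have : 1 ≤ b + c := by omega
            nlinarith
        · right; omega
      rcases hcomp with ⟨h1, h2⟩ | ⟨h1, h2⟩
      · -- left parent (a,b),(c-a,d-b)
        have hab : 1 ≤ a + b := by
          by_contra hcon
          have ha : a = 0 := by omega
          subst ha; simp at hd
        have hdet : a * (d - b) = b * (c - a) + 1 := by
          have e1 : a * (d - b) = a * d - a * b := by rw [Nat.mul_sub]
          have e2 : b * (c - a) = b * c - b * a := by rw [Nat.mul_sub]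
          have h3 : a * b ≤ a * d := Nat.mul_le_mul_left a h2
          have h4 : b * a ≤ b * c := Nat.mul_le_mul_left b h1
          have h5 : a * b = b * a := Nat.mul_comm a b
          omega
        have hsb := SBPairs.left (ih a b (c - a) (d - b) (by omega) hdet)
        have ec : a + (c - a) = c := by omega
        have ed : b + (d - b) = d := by omega
        rwa [ec, ed] at hsb
      · -- right parent (a-c,b-d),(c,d)
        have hcd : 1 ≤ c + d := by
          by_contra hcon
          have hdz : d = 0 := by omega
          subst hdz; simp at hd
        have hdet : (a - c) * d = (b - d) * c + 1 := by
          have e1 : (a - c) * d = a * d - c * d := by rw [Nat.sub_mul]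
          have e2 : (b - d) * c = b * c - d * c := by rw [Nat.sub_mul]
          have h3 : c * d ≤ a * d := Nat.mul_le_mul_right d h1
          have h4 : d * c ≤ b * c := Nat.mul_le_mul_right c h2
          have h5 : c * d = d * c := Nat.mul_comm c d
          omega
        have hsb := SBPairs.right (ih (a - c) (b - d) c d (by omega) hdet)
        have ec : a - c + c = a := by omega
        have ed : b - d + d = b := by omega
        rwa [ec, ed] at hsb

lemma sb_to_mp (q r : ℤ) {A B : ℕ × ℕ} (h : SBPairs A B) :
    MediantPairs q r ((A.1 : ℤ) * r + (A.2 : ℤ) * (r - q) + q,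
      (B.1 : ℤ) * r + (B.2 : ℤ) * (r - q) + q) := by
  induction h with
  | root =>
    have e1 : ((1 : ℕ) : ℤ) * r + ((0 : ℕ) : ℤ) * (r - q) + q = r + q := by push_cast; ring
    have e2 : ((0 : ℕ) : ℤ) * r + ((1 : ℕ) : ℤ) * (r - q) + q = r := by push_cast; ring
    rw [show ((((1:ℕ):ℤ) * r + ((0:ℕ):ℤ) * (r - q) + q, ((0:ℕ):ℤ) * r + ((1:ℕ):ℤ) * (r - q) + q) : ℤ × ℤ)
      = (r + q, r) by rw [e1, e2]]
    exact MediantPairs.root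
  | @left a b c d _ ih =>
    have := MediantPairs.left ih
    have e : ((a : ℤ) * r + (b : ℤ) * (r - q) + q) + ((c : ℤ) * r + (d : ℤ) * (r - q) + q) - q
        = ((a + c : ℕ) : ℤ) * r + ((b + d : ℕ) : ℤ) * (r - q) + q := by push_cast; ring
    rwa [e] at this
  | @right a b c d _ ih =>
    have := MediantPairs.right ih
    have e : ((a : ℤ) * r + (b : ℤ) * (r - q) + q) + ((c : ℤ) * r + (d : ℤ) * (r - q) + q) - q
        = ((a + c : ℕ) : ℤ) * r + ((b + d : ℕ) : ℤ) * (r - q) + q := by push_cast; ring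
    rwa [e] at this
lemma sb_to_mp' (q r : ℤ) {a b c d : ℕ} (h : SBPairs (a, b) (c, d)) :
    MediantPairs q r ((a : ℤ) * r + (b : ℤ) * (r - q) + q,
      (c : ℤ) * r + (d : ℤ) * (r - q) + q) := sb_to_mp q r h

/-- Let `p = q m + r` with `q ≥ 4`, `2 ≤ r ≤ q - 2` and `gcd(p, q) = 1`.  Then the tree of
labels generated from the pair `(r + q, r)` by the mediant-minus-`q` rule contains a label
equal to `q + 1` or `q - 1`. -/
theorem mediant_tree_reaches_q_pm_one (p q m r : ℤ)
    (hq : 4 ≤ q) (hr₁ : 2 ≤ r) (hr₂ : r ≤ q - 2)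
    (hp : p = q * m + r) (hcop : IsCoprime p q) :
    ∃ n₁ n₂ : ℤ, MediantPairs q r (n₁, n₂) ∧
      (n₁ = q + 1 ∨ n₁ = q - 1 ∨ n₂ = q + 1 ∨ n₂ = q - 1) := by
  obtain ⟨x, y, hxy⟩ := hcop
  rw [hp] at hxy
  have hrq : x * r + (x * m + y) * q = 1 := by linear_combination hxy
  have hq0 : (0 : ℤ) < q := by linarith
  set s : ℤ := x % q with hs
  have hsge : 0 ≤ s := Int.emod_nonneg x (by omega)
  have hdiv : x % q + q * (x / q) = x := Int.emod_add_mul_ediv x q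
  set v : ℤ := -(x * m + y) - (x / q) * r with hv
  have key : s * r = 1 + q * v := by
    rw [hs, hv]; linear_combination r * hdiv + hrq
  have hs1 : 1 ≤ s := by
    rcases eq_or_lt_of_le hsge with he | h
    · exfalso
      have h1 : q ∣ (1 : ℤ) := ⟨-v, by linear_combination -key - r * he⟩
      have := Int.le_of_dvd one_pos h1
      linarith
    · omega
  have hsr2 : 2 ≤ s * r := by nlinarith
  have hv1 : 1 ≤ v := by
    by_contra hcon
    push_neg at hcon
    have hvle : v ≤ 0 := by omega
    nlinarith
  set u : ℤ := s - v with hu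
  have hur : u * r = 1 + v * (q - r) := by rw [hu]; linear_combination key
  have hu1 : 1 ≤ u := by
    have h2 : 3 ≤ u * r := by nlinarith
    by_contra hcon
    push_neg at hcon
    have h1 : u ≤ 0 := by omega
    nlinarith
  have huv : u * r + v * (r - q) = 1 := by linear_combination hur
  -- Bezout split of (u, v) into a Stern–Brocot position
  set k : ℤ := (r - q - 1) / u with hk0
  have hk : (r - q - 1) % u + u * k = r - q - 1 := Int.emod_add_mul_ediv (r - q - 1) u
  set a : ℤ := (r - q - 1) % u + 1 with ha0
  have ha1 : 1 ≤ a := by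
    have := Int.emod_nonneg (r - q - 1) (show u ≠ 0 by omega)
    omega
  have hau : a ≤ u := by
    have := Int.emod_lt_of_pos (r - q - 1) (show 0 < u by omega)
    omega
  set b : ℤ := -r - k * v with hb0
  have hab : a * v = 1 + u * b := by
    rw [ha0, hb0]; linear_combination v * hk + huv
  have hb1 : 0 ≤ b := by
    have h1 : v ≤ a * v := by nlinarith
    by_contra hcon
    push_neg at hcon
    have h2 : b ≤ -1 := by omega
    nlinarith
  have hbv : b ≤ v - 1 := by
    have h1 : a * v ≤ u * v := by nlinarith
    by_contra hcon
    push_neg at hcon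
    have h2 : v ≤ b := by omega
    nlinarith
  set c : ℤ := u - a with hc0
  set d : ℤ := v - b with hd0
  have hc1 : 0 ≤ c := by omega
  have hd1 : 1 ≤ d := by omega
  have hdet : a * d = b * c + 1 := by
    rw [hc0, hd0]; linear_combination hab
  -- move to ℕ
  set A : ℕ := a.toNat with hA0
  set B : ℕ := b.toNat with hB0
  set C : ℕ := c.toNat with hC0
  set D : ℕ := d.toNat with hD0
  have hA : (A : ℤ) = a := Int.toNat_of_nonneg (by omega)
  have hB : (B : ℤ) = b := Int.toNat_of_nonneg hb1
  have hC : (C : ℤ) = c := Int.toNat_of_nonneg hc1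
  have hD : (D : ℤ) = d := Int.toNat_of_nonneg (by omega)
  have hdetN : A * D = B * C + 1 := by
    have h1 : ((A * D : ℕ) : ℤ) = ((B * C + 1 : ℕ) : ℤ) := by
      push_cast
      rw [hA, hB, hC, hD]
      exact hdet
    exact_mod_cast h1
  have hsb : SBPairs (A, B) (C, D) := sb_of_det (A + B + C + D) A B C D le_rfl hdetN
  have final := MediantPairs.left (sb_to_mp' q r hsb)
  have e : ((A : ℤ) * r + (B : ℤ) * (r - q) + q) + ((C : ℤ) * r + (D : ℤ) * (r - q) + q) - q
      = q + 1 := by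
    rw [hA, hB, hC, hD, hc0, hd0]
    linear_combination huv
  rw [e] at final
  exact ⟨(A : ℤ) * r + (B : ℤ) * (r - q) + q, q + 1, final,
    Or.inr (Or.inr (Or.inl rfl))⟩
end
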